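/- arXiv:1605.06804 — 2 statements merged into one kernel-verified Lean document; each statement's English description precedes it below -/
import Mathlib

section
/- Every real 4×4 matrix A satisfying AᵀA = I and det A = 1 (i.e., every element of SO(4)) can be written as a product A = A₁(a,b,c,d)·A₂(p,q,r,s), where a,b,c,d,p,q,r,s are real numbers with a²+b²+c²+d² = 1 and p²+q²+r²+s² = 1 (the isoclinic representation of van Elfrikhof). -/
open Matrix

/-- The first isoclinic factor: the 4×4 matrix with rows
(a,−b,−c,−d), (b,a,−d,c), (c,d,a,−b), (d,−c,b,a). -/
def A₁ (a b c d : ℝ) : Matrix (Fin 4) (Fin 4) ℝ :=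
  !![a, -b, -c, -d;
     b,  a, -d,  c;
     c,  d,  a, -b;
     d, -c,  b,  a]

/-- The second isoclinic factor: the 4×4 matrix with rows
(p,−q,−r,−s), (q,p,s,−r), (r,−s,p,q), (s,r,−q,p). -/
def A₂ (p q r s : ℝ) : Matrix (Fin 4) (Fin 4) ℝ :=
  !![p, -q, -r, -s;
     q,  p,  s, -r;
     r, -s,  p,  q;
     s,  r, -q,  p]

lemma A1_mul (a b c d a' b' c' d' : ℝ) :
    A₁ a b c d * A₁ a' b' c' d' =
      A₁ (a*a'-b*b'-c*c'-d*d') (a*b'+b*a'+c*d'-d*c')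
         (a*c'-b*d'+c*a'+d*b') (a*d'+b*c'-c*b'+d*a') := by
  ext i j
  fin_cases i <;> fin_cases j <;>
    simp [A₁, Matrix.mul_apply, Fin.sum_univ_four] <;> ring

lemma A1_one : A₁ 1 0 0 0 = 1 := by
  ext i j
  fin_cases i <;> fin_cases j <;> simp [A₁, Matrix.one_apply, Matrix.vecHead, Matrix.vecTail]

lemma A1_transpose (a b c d : ℝ) : (A₁ a b c d)ᵀ = A₁ a (-b) (-c) (-d) := by
  ext i j
  fin_cases i <;> fin_cases j <;> simp [A₁]

lemma A1_det (a b c d : ℝ) : (A₁ a b c d).det = (a^2+b^2+c^2+d^2)^2 := by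
  simp [A₁, Matrix.det_succ_row_zero, Fin.sum_univ_succ, Fin.succAbove, Matrix.vecHead, Matrix.vecTail, Fin.castSucc, Fin.castAdd, Fin.castLE]
  ring

lemma A1_A2_conj (q0 q1 q2 q3 : ℝ) :
    A₁ q0 q1 q2 q3 * A₂ q0 (-q1) (-q2) (-q3) =
      !![q0^2+q1^2+q2^2+q3^2, 0, 0, 0;
         0, q0^2+q1^2-q2^2-q3^2, 2*(q1*q2-q0*q3), 2*(q1*q3+q0*q2);
         0, 2*(q1*q2+q0*q3), q0^2-q1^2+q2^2-q3^2, 2*(q2*q3-q0*q1);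
         0, 2*(q1*q3-q0*q2), 2*(q2*q3+q0*q1), q0^2-q1^2-q2^2+q3^2] := by
  ext i j
  fin_cases i <;> fin_cases j <;>
    simp [A₁, A₂, Matrix.mul_apply, Fin.sum_univ_four, Matrix.vecHead, Matrix.vecTail] <;> ring


lemma qdh (α s x y : ℝ) (z : ℝ) (hα : α * α = s) (hne : α ≠ 0)
    (h : x * y = s * z) : 4 * (x / (2 * α) * (y / (2 * α))) = z := by
  have hs : s ≠ 0 := by rw [← hα]; exact mul_ne_zero hne hne
  field_simp
  linear_combination 4 * h - 4 * z * hα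

lemma so3_quat (b11 b12 b13 b21 b22 b23 b31 b32 b33 : ℝ)
    (hc11 : b11*b11 + b21*b21 + b31*b31 = 1)
    (hc12 : b11*b12 + b21*b22 + b31*b32 = 0)
    (hc13 : b11*b13 + b21*b23 + b31*b33 = 0)
    (hc22 : b12*b12 + b22*b22 + b32*b32 = 1)
    (hc23 : b12*b13 + b22*b23 + b32*b33 = 0)
    (hc33 : b13*b13 + b23*b23 + b33*b33 = 1)
    (hr11 : b11*b11 + b12*b12 + b13*b13 = 1)
    (hr12 : b11*b21 + b12*b22 + b13*b23 = 0)
    (hr13 : b11*b31 + b12*b32 + b13*b33 = 0)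
    (hr22 : b21*b21 + b22*b22 + b23*b23 = 1)
    (hr23 : b21*b31 + b22*b32 + b23*b33 = 0)
    (hr33 : b31*b31 + b32*b32 + b33*b33 = 1)
    (hd : b11*(b22*b33 - b23*b32) - b12*(b21*b33 - b23*b31) + b13*(b21*b32 - b22*b31) = 1) :
    ∃ q0 q1 q2 q3 : ℝ,
      4*(q0*q0) = 1+b11+b22+b33 ∧ 4*(q1*q1) = 1+b11-b22-b33 ∧
      4*(q2*q2) = 1-b11+b22-b33 ∧ 4*(q3*q3) = 1-b11-b22+b33 ∧
      4*(q0*q1) = b32-b23 ∧ 4*(q0*q2) = b13-b31 ∧ 4*(q0*q3) = b21-b12 ∧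
      4*(q1*q2) = b12+b21 ∧ 4*(q1*q3) = b13+b31 ∧ 4*(q2*q3) = b23+b32 := by
  rcases le_or_gt 1 (1+b11+b22+b33) with hm|hm0
  · have hs : (0:ℝ) < (1+b11+b22+b33) := by linarith
    have ha : Real.sqrt (1+b11+b22+b33) * Real.sqrt (1+b11+b22+b33) = (1+b11+b22+b33) := Real.mul_self_sqrt (le_of_lt hs)
    have hne : Real.sqrt (1+b11+b22+b33) ≠ 0 := ne_of_gt (Real.sqrt_pos.mpr hs)
    refine ⟨(1+b11+b22+b33)/(2*Real.sqrt (1+b11+b22+b33)), (b32-b23)/(2*Real.sqrt (1+b11+b22+b33)), (b13-b31)/(2*Real.sqrt (1+b11+b22+b33)), (b21-b12)/(2*Real.sqrt (1+b11+b22+b33)), ?_, ?_, ?_, ?_, ?_, ?_, ?_, ?_, ?_, ?_⟩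
    · exact qdh _ _ _ _ _ ha hne (by ring)
    · exact qdh _ _ _ _ _ ha hne (by linear_combination ((2 : ℝ)*b23*b32 + (-2 : ℝ)*b22*b33)*hc11 + ((-2 : ℝ)*b23*b31 + (2 : ℝ)*b21*b33)*hc12 + ((2 : ℝ)*b22*b31 + (-2 : ℝ)*b21*b32)*hc13 + ((1 : ℝ))*hc22 + ((1 : ℝ))*hc33 + ((-1 : ℝ))*hr11 + ((2 : ℝ)*b11)*hd)
    · exact qdh _ _ _ _ _ ha hne (by linear_combination ((1 : ℝ) + (-1 : ℝ)*b33^2 + (-1 : ℝ)*b32^2)*hc11 + ((1 : ℝ)*b31*b32 + (-1 : ℝ)*b21*b22 + (-2 : ℝ)*b13*b32 + (2 : ℝ)*b12*b33 + (-1 : ℝ)*b11*b12)*hc12 + ((1 : ℝ)*b31*b33 + (-1 : ℝ)*b21*b23 + (-1 : ℝ)*b11*b13)*hc13 + ((-1 : ℝ) + (-1 : ℝ)*b33^2 + (1 : ℝ)*b21^2 + (2 : ℝ)*b13*b31 + (-2 : ℝ)*b11*b33 + (1 : ℝ)*b11^2)*hc22 + ((1 : ℝ)*b32*b33 + (-1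 : ℝ)*b22*b23 + (-2 : ℝ)*b12*b31 + (-1 : ℝ)*b12*b13 + (2 : ℝ)*b11*b32)*hc23 + ((-1 : ℝ) + (1 : ℝ)*b22^2 + (1 : ℝ)*b21^2 + (1 : ℝ)*b12^2 + (1 : ℝ)*b11^2)*hc33 + ((2 : ℝ) + (-1 : ℝ)*b23^2 + (-1 : ℝ)*b22^2 + (-1 : ℝ)*b21^2)*hr11 + ((1 : ℝ)*b13*b23 + (1 : ℝ)*b12*b22 + (1 : ℝ)*b11*b21)*hr12 + ((2 : ℝ)*b22)*hd)
    · exact qdh _ _ _ _ _ ha hne (by linear_combination ((1 : ℝ)*b33^2 + (1 : ℝ)*b32^2)*hc11 + ((-1 : ℝ)*b31*b32 + (1 : ℝ)*b21*b22 + (1 : ℝ)*b11*b12)*hc12 + ((-1 : ℝ)*b31*b33 + (1 : ℝ)*b21*b23 + (2 : ℝ)*b13*b22 + (-2 : ℝ)*b12*b23 + (1 : ℝ)*b11*b13)*hc13 + ((1 : ℝ) + (1 : ℝ)*b33^2 + (-1 : ℝ)*b21^2 + (-1 : ℝ)*b11^2)*hc22 + ((-1 : ℝ)*b32*b33 + (1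 : ℝ)*b22*b23 + (-2 : ℝ)*b13*b21 + (1 : ℝ)*b12*b13 + (2 : ℝ)*b11*b23)*hc23 + ((1 : ℝ) + (-1 : ℝ)*b22^2 + (-1 : ℝ)*b21^2 + (2 : ℝ)*b12*b21 + (-1 : ℝ)*b12^2 + (-2 : ℝ)*b11*b22 + (-1 : ℝ)*b11^2)*hc33 + ((-1 : ℝ) + (1 : ℝ)*b23^2 + (1 : ℝ)*b22^2 + (1 : ℝ)*b21^2)*hr11 + ((-1 : ℝ)*b13*b23 + (-1 : ℝ)*b12*b22 + (-1 : ℝ)*b11*b21)*hr12 + ((2 : ℝ)*b33)*hd)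
    · exact qdh _ _ _ _ _ ha hne (by ring)
    · exact qdh _ _ _ _ _ ha hne (by ring)
    · exact qdh _ _ _ _ _ ha hne (by ring)
    · exact qdh _ _ _ _ _ ha hne (by linear_combination ((-1 : ℝ)*b13*b32 + (1 : ℝ)*b12*b33)*hc11 + ((-1 : ℝ) + (1 : ℝ)*b23*b32 + (-1 : ℝ)*b22*b33 + (1 : ℝ)*b13*b31 + (-1 : ℝ)*b11*b33)*hc12 + ((-1 : ℝ)*b12*b31 + (1 : ℝ)*b11*b32)*hc13 + ((-1 : ℝ)*b23*b31 + (1 : ℝ)*b21*b33)*hc22 + ((1 : ℝ)*b22*b31 + (-1 : ℝ)*b21*b32)*hc23 + ((-1 : ℝ))*hr12 + ((1 : ℝ)*b21 + (1 : ℝ)*b12)*hd)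
    · exact qdh _ _ _ _ _ ha hne (by linear_combination ((1 : ℝ)*b13*b22 + (-1 : ℝ)*b12*b23)*hc11 + ((-1 : ℝ)*b13*b21 + (1 : ℝ)*b11*b23)*hc12 + ((-1 : ℝ) + (1 : ℝ)*b23*b32 + (-1 : ℝ)*b22*b33 + (1 : ℝ)*b12*b21 + (-1 : ℝ)*b11*b22)*hc13 + ((-1 : ℝ)*b23*b31 + (1 : ℝ)*b21*b33)*hc23 + ((1 : ℝ)*b22*b31 + (-1 : ℝ)*b21*b32)*hc33 + ((-1 : ℝ))*hr13 + ((1 : ℝ)*b31 + (1 : ℝ)*b13)*hd)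
    · exact qdh _ _ _ _ _ ha hne (by linear_combination ((1 : ℝ)*b23*b33 + (1 : ℝ)*b22*b32)*hc11 + ((-1 : ℝ)*b22*b31 + (-1 : ℝ)*b21*b32 + (1 : ℝ)*b13*b22 + (-1 : ℝ)*b12*b23)*hc12 + ((-1 : ℝ)*b23*b31 + (-1 : ℝ)*b21*b33 + (-1 : ℝ)*b13*b32 + (1 : ℝ)*b12*b33)*hc13 + ((1 : ℝ)*b23*b33 + (1 : ℝ)*b21*b31 + (-1 : ℝ)*b13*b21 + (1 : ℝ)*b11*b23)*hc22 + ((-1 : ℝ) + (-1 : ℝ)*b23*b32 + (-1 : ℝ)*b22*b33 + (1 : ℝ)*b13*b31 + (1 : ℝ)*b12*b21 + (-1 : ℝ)*b11*b33 + (-1 : ℝ)*b11*b22)*hc23 + ((1 : ℝ)*b22*b32 + (1 : ℝ)*b21*b31 + (-1 : ℝ)*b12*b31 + (1 : ℝ)*b11*b32)*hc33 + ((-1 : ℝ)*b23*b33 + (-1 : ℝ)*b22*b32 + (-1 : ℝ)*b21*b31)*hr11 + ((1 : ℝ)*b13*b33 + (1 : ℝ)*b12*b32 + (1 : ℝ)*b11*b31)*hr12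 + ((1 : ℝ)*b32 + (1 : ℝ)*b23)*hd)
  rcases le_or_gt 1 (1+b11-b22-b33) with hm|hm1
  · have hs : (0:ℝ) < (1+b11-b22-b33) := by linarith
    have ha : Real.sqrt (1+b11-b22-b33) * Real.sqrt (1+b11-b22-b33) = (1+b11-b22-b33) := Real.mul_self_sqrt (le_of_lt hs)
    have hne : Real.sqrt (1+b11-b22-b33) ≠ 0 := ne_of_gt (Real.sqrt_pos.mpr hs)
    refine ⟨(b32-b23)/(2*Real.sqrt (1+b11-b22-b33)), (1+b11-b22-b33)/(2*Real.sqrt (1+b11-b22-b33)), (b12+b21)/(2*Real.sqrt (1+b11-b22-b33)), (b13+b31)/(2*Real.sqrt (1+b11-b22-b33)), ?_, ?_, ?_, ?_, ?_, ?_, ?_, ?_, ?_, ?_⟩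
    · exact qdh _ _ _ _ _ ha hne (by linear_combination ((2 : ℝ)*b23*b32 + (-2 : ℝ)*b22*b33)*hc11 + ((-2 : ℝ)*b23*b31 + (2 : ℝ)*b21*b33)*hc12 + ((2 : ℝ)*b22*b31 + (-2 : ℝ)*b21*b32)*hc13 + ((1 : ℝ))*hc22 + ((1 : ℝ))*hc33 + ((-1 : ℝ))*hr11 + ((2 : ℝ)*b11)*hd)
    · exact qdh _ _ _ _ _ ha hne (by ring)
    · exact qdh _ _ _ _ _ ha hne (by linear_combination ((1 : ℝ)*b33^2 + (1 : ℝ)*b32^2)*hc11 + ((-1 : ℝ)*b31*b32 + (1 : ℝ)*b21*b22 + (1 : ℝ)*b11*b12)*hc12 + ((-1 : ℝ)*b31*b33 + (1 : ℝ)*b21*b23 + (-2 : ℝ)*b13*b22 + (2 : ℝ)*b12*b23 + (1 : ℝ)*b11*b13)*hc13 + ((1 : ℝ) + (1 : ℝ)*b33^2 + (-1 : ℝ)*b21^2 + (-1 : ℝ)*b11^2)*hc22 + ((-1 : ℝ)*b32*b33 + (1 : ℝ)*b22*b23 + (2 : ℝ)*b13*b21 + (1 : ℝ)*b12*b13 +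 (-2 : ℝ)*b11*b23)*hc23 + ((1 : ℝ) + (-1 : ℝ)*b22^2 + (-1 : ℝ)*b21^2 + (-2 : ℝ)*b12*b21 + (-1 : ℝ)*b12^2 + (2 : ℝ)*b11*b22 + (-1 : ℝ)*b11^2)*hc33 + ((-1 : ℝ) + (1 : ℝ)*b23^2 + (1 : ℝ)*b22^2 + (1 : ℝ)*b21^2)*hr11 + ((-1 : ℝ)*b13*b23 + (-1 : ℝ)*b12*b22 + (-1 : ℝ)*b11*b21)*hr12 + ((-2 : ℝ)*b33)*hd)
    · exact qdh _ _ _ _ _ ha hne (by linear_combination ((1 : ℝ) + (-1 : ℝ)*b33^2 + (-1 : ℝ)*b32^2)*hc11 + ((1 : ℝ)*b31*b32 + (-1 : ℝ)*b21*b22 + (2 : ℝ)*b13*b32 + (-2 : ℝ)*b12*b33 + (-1 : ℝ)*b11*b12)*hc12 + ((1 : ℝ)*b31*b33 + (-1 : ℝ)*b21*b23 + (-1 : ℝ)*b11*b13)*hc13 + ((-1 : ℝ) + (-1 : ℝ)*b33^2 + (1 : ℝ)*b21^2 + (-2 : ℝ)*b13*b31 + (2 : ℝ)*b11*b33 + (1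 : ℝ)*b11^2)*hc22 + ((1 : ℝ)*b32*b33 + (-1 : ℝ)*b22*b23 + (2 : ℝ)*b12*b31 + (-1 : ℝ)*b12*b13 + (-2 : ℝ)*b11*b32)*hc23 + ((-1 : ℝ) + (1 : ℝ)*b22^2 + (1 : ℝ)*b21^2 + (1 : ℝ)*b12^2 + (1 : ℝ)*b11^2)*hc33 + ((2 : ℝ) + (-1 : ℝ)*b23^2 + (-1 : ℝ)*b22^2 + (-1 : ℝ)*b21^2)*hr11 + ((1 : ℝ)*b13*b23 + (1 : ℝ)*b12*b22 + (1 : ℝ)*b11*b21)*hr12 + ((-2 : ℝ)*b22)*hd)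
    · exact qdh _ _ _ _ _ ha hne (by ring)
    · exact qdh _ _ _ _ _ ha hne (by linear_combination ((-1 : ℝ)*b13*b22 + (1 : ℝ)*b12*b23)*hc11 + ((1 : ℝ)*b13*b21 + (-1 : ℝ)*b11*b23)*hc12 + ((-1 : ℝ) + (1 : ℝ)*b23*b32 + (-1 : ℝ)*b22*b33 + (-1 : ℝ)*b12*b21 + (1 : ℝ)*b11*b22)*hc13 + ((-1 : ℝ)*b23*b31 + (1 : ℝ)*b21*b33)*hc23 + ((1 : ℝ)*b22*b31 + (-1 : ℝ)*b21*b32)*hc33 + ((1 : ℝ))*hr13 + ((-1 : ℝ)*b31 + (1 : ℝ)*b13)*hd)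
    · exact qdh _ _ _ _ _ ha hne (by linear_combination ((-1 : ℝ)*b13*b32 + (1 : ℝ)*b12*b33)*hc11 + ((1 : ℝ) + (-1 : ℝ)*b23*b32 + (1 : ℝ)*b22*b33 + (1 : ℝ)*b13*b31 + (-1 : ℝ)*b11*b33)*hc12 + ((-1 : ℝ)*b12*b31 + (1 : ℝ)*b11*b32)*hc13 + ((1 : ℝ)*b23*b31 + (-1 : ℝ)*b21*b33)*hc22 + ((-1 : ℝ)*b22*b31 + (1 : ℝ)*b21*b32)*hc23 + ((-1 : ℝ))*hr12 + ((1 : ℝ)*b21 + (-1 : ℝ)*b12)*hd)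
    · exact qdh _ _ _ _ _ ha hne (by ring)
    · exact qdh _ _ _ _ _ ha hne (by ring)
    · exact qdh _ _ _ _ _ ha hne (by linear_combination ((-1 : ℝ)*b23*b33 + (-1 : ℝ)*b22*b32)*hc11 + ((1 : ℝ)*b22*b31 + (1 : ℝ)*b21*b32 + (1 : ℝ)*b13*b22 + (-1 : ℝ)*b12*b23)*hc12 + ((1 : ℝ)*b23*b31 + (1 : ℝ)*b21*b33 + (-1 : ℝ)*b13*b32 + (1 : ℝ)*b12*b33)*hc13 + ((-1 : ℝ)*b23*b33 + (-1 : ℝ)*b21*b31 + (-1 : ℝ)*b13*b21 + (1 : ℝ)*b11*b23)*hc22 + ((1 : ℝ) + (1 : ℝ)*b23*b32 + (1 : ℝ)*b22*b33 + (1 : ℝ)*b13*b31 + (1 : ℝ)*b12*b21 + (-1 : ℝ)*b11*b33 + (-1 : ℝ)*b11*b22)*hc23 + ((-1 : ℝ)*b22*b32 + (-1 : ℝ)*b21*b31 + (-1 : ℝ)*b12*b31 + (1 : ℝ)*b11*b32)*hc33 + ((1 : ℝ)*b23*b33 + (1 : ℝ)*b22*b32 + (1 : ℝ)*b21*b31)*hr11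 + ((-1 : ℝ)*b13*b33 + (-1 : ℝ)*b12*b32 + (-1 : ℝ)*b11*b31)*hr12 + ((1 : ℝ)*b32 + (1 : ℝ)*b23)*hd)
  rcases le_or_gt 1 (1-b11+b22-b33) with hm|hm2
  · have hs : (0:ℝ) < (1-b11+b22-b33) := by linarith
    have ha : Real.sqrt (1-b11+b22-b33) * Real.sqrt (1-b11+b22-b33) = (1-b11+b22-b33) := Real.mul_self_sqrt (le_of_lt hs)
    have hne : Real.sqrt (1-b11+b22-b33) ≠ 0 := ne_of_gt (Real.sqrt_pos.mpr hs)
    refine ⟨(b13-b31)/(2*Real.sqrt (1-b11+b22-b33)), (b12+b21)/(2*Real.sqrt (1-b11+b22-b33)), (1-b11+b22-b33)/(2*Real.sqrt (1-b11+b22-b33)), (b23+b32)/(2*Real.sqrt (1-b11+b22-b33)), ?_, ?_, ?_, ?_, ?_, ?_, ?_, ?_, ?_, ?_⟩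
    · exact qdh _ _ _ _ _ ha hne (by linear_combination ((1 : ℝ) + (-1 : ℝ)*b33^2 + (-1 : ℝ)*b32^2)*hc11 + ((1 : ℝ)*b31*b32 + (-1 : ℝ)*b21*b22 + (-2 : ℝ)*b13*b32 + (2 : ℝ)*b12*b33 + (-1 : ℝ)*b11*b12)*hc12 + ((1 : ℝ)*b31*b33 + (-1 : ℝ)*b21*b23 + (-1 : ℝ)*b11*b13)*hc13 + ((-1 : ℝ) + (-1 : ℝ)*b33^2 + (1 : ℝ)*b21^2 + (2 : ℝ)*b13*b31 + (-2 : ℝ)*b11*b33 + (1 : ℝ)*b11^2)*hc22 + ((1 : ℝ)*b32*b33 + (-1 : ℝ)*b22*b23 + (-2 : ℝ)*b12*b31 + (-1 : ℝ)*b12*b13 + (2 : ℝ)*b11*b32)*hc23 + ((-1 : ℝ) + (1 : ℝ)*b22^2 + (1 : ℝ)*b21^2 + (1 : ℝ)*b12^2 + (1 : ℝ)*b11^2)*hc33 + ((2 : ℝ) + (-1 : ℝ)*b23^2 + (-1 : ℝ)*b22^2 + (-1 : ℝ)*b21^2)*hr11 + ((1 : ℝ)*b13*b23 + (1 : ℝ)*b12*b22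 + (1 : ℝ)*b11*b21)*hr12 + ((2 : ℝ)*b22)*hd)
    · exact qdh _ _ _ _ _ ha hne (by linear_combination ((1 : ℝ)*b33^2 + (1 : ℝ)*b32^2)*hc11 + ((-1 : ℝ)*b31*b32 + (1 : ℝ)*b21*b22 + (1 : ℝ)*b11*b12)*hc12 + ((-1 : ℝ)*b31*b33 + (1 : ℝ)*b21*b23 + (-2 : ℝ)*b13*b22 + (2 : ℝ)*b12*b23 + (1 : ℝ)*b11*b13)*hc13 + ((1 : ℝ) + (1 : ℝ)*b33^2 + (-1 : ℝ)*b21^2 + (-1 : ℝ)*b11^2)*hc22 + ((-1 : ℝ)*b32*b33 + (1 : ℝ)*b22*b23 + (2 : ℝ)*b13*b21 + (1 : ℝ)*b12*b13 + (-2 : ℝ)*b11*b23)*hc23 + ((1 : ℝ) + (-1 : ℝ)*b22^2 + (-1 : ℝ)*b21^2 + (-2 : ℝ)*b12*b21 + (-1 : ℝ)*b12^2 + (2 : ℝ)*b11*b22 + (-1 : ℝ)*b11^2)*hc33 + ((-1 : ℝ) + (1 : ℝ)*b23^2 + (1 : ℝ)*b22^2 + (1 : ℝ)*b21^2)*hr11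 + ((-1 : ℝ)*b13*b23 + (-1 : ℝ)*b12*b22 + (-1 : ℝ)*b11*b21)*hr12 + ((-2 : ℝ)*b33)*hd)
    · exact qdh _ _ _ _ _ ha hne (by ring)
    · exact qdh _ _ _ _ _ ha hne (by linear_combination ((-2 : ℝ)*b23*b32 + (2 : ℝ)*b22*b33)*hc11 + ((2 : ℝ)*b23*b31 + (-2 : ℝ)*b21*b33)*hc12 + ((-2 : ℝ)*b22*b31 + (2 : ℝ)*b21*b32)*hc13 + ((1 : ℝ))*hc22 + ((1 : ℝ))*hc33 + ((-1 : ℝ))*hr11 + ((-2 : ℝ)*b11)*hd)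
    · exact qdh _ _ _ _ _ ha hne (by linear_combination ((1 : ℝ)*b23*b33 + (1 : ℝ)*b22*b32)*hc11 + ((-1 : ℝ)*b22*b31 + (-1 : ℝ)*b21*b32 + (1 : ℝ)*b13*b22 + (-1 : ℝ)*b12*b23)*hc12 + ((-1 : ℝ)*b23*b31 + (-1 : ℝ)*b21*b33 + (1 : ℝ)*b13*b32 + (-1 : ℝ)*b12*b33)*hc13 + ((1 : ℝ)*b23*b33 + (1 : ℝ)*b21*b31 + (-1 : ℝ)*b13*b21 + (1 : ℝ)*b11*b23)*hc22 + ((1 : ℝ) + (-1 : ℝ)*b23*b32 + (-1 : ℝ)*b22*b33 + (-1 : ℝ)*b13*b31 + (1 : ℝ)*b12*b21 + (1 : ℝ)*b11*b33 + (-1 : ℝ)*b11*b22)*hc23 + ((1 : ℝ)*b22*b32 + (1 : ℝ)*b21*b31 + (1 : ℝ)*b12*b31 + (-1 : ℝ)*b11*b32)*hc33 + ((-1 : ℝ)*b23*b33 + (-1 : ℝ)*b22*b32 + (-1 : ℝ)*b21*b31)*hr11 + ((1 : ℝ)*b13*b33 + (1 : ℝ)*b12*b32 + (1 : ℝ)*b11*b31)*hr12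 + ((1 : ℝ)*b32 + (-1 : ℝ)*b23)*hd)
    · exact qdh _ _ _ _ _ ha hne (by ring)
    · exact qdh _ _ _ _ _ ha hne (by linear_combination ((-1 : ℝ)*b13*b32 + (1 : ℝ)*b12*b33)*hc11 + ((-1 : ℝ) + (-1 : ℝ)*b23*b32 + (1 : ℝ)*b22*b33 + (1 : ℝ)*b13*b31 + (-1 : ℝ)*b11*b33)*hc12 + ((-1 : ℝ)*b12*b31 + (1 : ℝ)*b11*b32)*hc13 + ((1 : ℝ)*b23*b31 + (-1 : ℝ)*b21*b33)*hc22 + ((-1 : ℝ)*b22*b31 + (1 : ℝ)*b21*b32)*hc23 + ((1 : ℝ))*hr12 + ((1 : ℝ)*b21 + (-1 : ℝ)*b12)*hd)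
    · exact qdh _ _ _ _ _ ha hne (by ring)
    · exact qdh _ _ _ _ _ ha hne (by linear_combination ((1 : ℝ)*b13*b22 + (-1 : ℝ)*b12*b23)*hc11 + ((-1 : ℝ)*b13*b21 + (1 : ℝ)*b11*b23)*hc12 + ((1 : ℝ) + (1 : ℝ)*b23*b32 + (-1 : ℝ)*b22*b33 + (1 : ℝ)*b12*b21 + (-1 : ℝ)*b11*b22)*hc13 + ((-1 : ℝ)*b23*b31 + (1 : ℝ)*b21*b33)*hc23 + ((1 : ℝ)*b22*b31 + (-1 : ℝ)*b21*b32)*hc33 + ((1 : ℝ))*hr13 + ((1 : ℝ)*b31 + (1 : ℝ)*b13)*hd)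
    · exact qdh _ _ _ _ _ ha hne (by ring)
  have hm : (1:ℝ) ≤ 1-b11-b22+b33 := by linarith
  have hs : (0:ℝ) < (1-b11-b22+b33) := by linarith
  have ha : Real.sqrt (1-b11-b22+b33) * Real.sqrt (1-b11-b22+b33) = (1-b11-b22+b33) := Real.mul_self_sqrt (le_of_lt hs)
  have hne : Real.sqrt (1-b11-b22+b33) ≠ 0 := ne_of_gt (Real.sqrt_pos.mpr hs)
  refine ⟨(b21-b12)/(2*Real.sqrt (1-b11-b22+b33)), (b13+b31)/(2*Real.sqrt (1-b11-b22+b33)), (b23+b32)/(2*Real.sqrt (1-b11-b22+b33)), (1-b11-b22+b33)/(2*Real.sqrt (1-b11-b22+b33)), ?_, ?_, ?_, ?_, ?_, ?_, ?_, ?_, ?_, ?_⟩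
  · exact qdh _ _ _ _ _ ha hne (by linear_combination ((1 : ℝ)*b33^2 + (1 : ℝ)*b32^2)*hc11 + ((-1 : ℝ)*b31*b32 + (1 : ℝ)*b21*b22 + (1 : ℝ)*b11*b12)*hc12 + ((-1 : ℝ)*b31*b33 + (1 : ℝ)*b21*b23 + (2 : ℝ)*b13*b22 + (-2 : ℝ)*b12*b23 + (1 : ℝ)*b11*b13)*hc13 + ((1 : ℝ) + (1 : ℝ)*b33^2 + (-1 : ℝ)*b21^2 + (-1 : ℝ)*b11^2)*hc22 + ((-1 : ℝ)*b32*b33 + (1 : ℝ)*b22*b23 + (-2 : ℝ)*b13*b21 + (1 : ℝ)*b12*b13 + (2 : ℝ)*b11*b23)*hc23 + ((1 : ℝ) + (-1 : ℝ)*b22^2 + (-1 : ℝ)*b21^2 + (2 : ℝ)*b12*b21 + (-1 : ℝ)*b12^2 + (-2 : ℝ)*b11*b22 + (-1 : ℝ)*b11^2)*hc33 + ((-1 : ℝ) + (1 : ℝ)*b23^2 + (1 : ℝ)*b22^2 + (1 : ℝ)*b21^2)*hr11 + ((-1 : ℝ)*b13*b23 + (-1 : ℝ)*b12*b22 + (-1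 : ℝ)*b11*b21)*hr12 + ((2 : ℝ)*b33)*hd)
  · exact qdh _ _ _ _ _ ha hne (by linear_combination ((1 : ℝ) + (-1 : ℝ)*b33^2 + (-1 : ℝ)*b32^2)*hc11 + ((1 : ℝ)*b31*b32 + (-1 : ℝ)*b21*b22 + (2 : ℝ)*b13*b32 + (-2 : ℝ)*b12*b33 + (-1 : ℝ)*b11*b12)*hc12 + ((1 : ℝ)*b31*b33 + (-1 : ℝ)*b21*b23 + (-1 : ℝ)*b11*b13)*hc13 + ((-1 : ℝ) + (-1 : ℝ)*b33^2 + (1 : ℝ)*b21^2 + (-2 : ℝ)*b13*b31 + (2 : ℝ)*b11*b33 + (1 : ℝ)*b11^2)*hc22 + ((1 : ℝ)*b32*b33 + (-1 : ℝ)*b22*b23 + (2 : ℝ)*b12*b31 + (-1 : ℝ)*b12*b13 + (-2 : ℝ)*b11*b32)*hc23 + ((-1 : ℝ) + (1 : ℝ)*b22^2 + (1 : ℝ)*b21^2 + (1 : ℝ)*b12^2 + (1 : ℝ)*b11^2)*hc33 + ((2 : ℝ) + (-1 : ℝ)*b23^2 + (-1 : ℝ)*b22^2 + (-1 : ℝ)*b21^2)*hr11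 + ((1 : ℝ)*b13*b23 + (1 : ℝ)*b12*b22 + (1 : ℝ)*b11*b21)*hr12 + ((-2 : ℝ)*b22)*hd)
  · exact qdh _ _ _ _ _ ha hne (by linear_combination ((-2 : ℝ)*b23*b32 + (2 : ℝ)*b22*b33)*hc11 + ((2 : ℝ)*b23*b31 + (-2 : ℝ)*b21*b33)*hc12 + ((-2 : ℝ)*b22*b31 + (2 : ℝ)*b21*b32)*hc13 + ((1 : ℝ))*hc22 + ((1 : ℝ))*hc33 + ((-1 : ℝ))*hr11 + ((-2 : ℝ)*b11)*hd)
  · exact qdh _ _ _ _ _ ha hne (by ring)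
  · exact qdh _ _ _ _ _ ha hne (by linear_combination ((-1 : ℝ)*b23*b33 + (-1 : ℝ)*b22*b32)*hc11 + ((1 : ℝ)*b22*b31 + (1 : ℝ)*b21*b32 + (1 : ℝ)*b13*b22 + (-1 : ℝ)*b12*b23)*hc12 + ((1 : ℝ)*b23*b31 + (1 : ℝ)*b21*b33 + (1 : ℝ)*b13*b32 + (-1 : ℝ)*b12*b33)*hc13 + ((-1 : ℝ)*b23*b33 + (-1 : ℝ)*b21*b31 + (-1 : ℝ)*b13*b21 + (1 : ℝ)*b11*b23)*hc22 + ((-1 : ℝ) + (1 : ℝ)*b23*b32 + (1 : ℝ)*b22*b33 + (-1 : ℝ)*b13*b31 + (1 : ℝ)*b12*b21 + (1 : ℝ)*b11*b33 + (-1 : ℝ)*b11*b22)*hc23 + ((-1 : ℝ)*b22*b32 + (-1 : ℝ)*b21*b31 + (1 : ℝ)*b12*b31 + (-1 : ℝ)*b11*b32)*hc33 + ((1 : ℝ)*b23*b33 + (1 : ℝ)*b22*b32 + (1 : ℝ)*b21*b31)*hr11 + ((-1 : ℝ)*b13*b33 + (-1 : ℝ)*b12*b32 + (-1 : ℝ)*b11*b31)*hr12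 + ((1 : ℝ)*b32 + (-1 : ℝ)*b23)*hd)
  · exact qdh _ _ _ _ _ ha hne (by linear_combination ((-1 : ℝ)*b13*b22 + (1 : ℝ)*b12*b23)*hc11 + ((1 : ℝ)*b13*b21 + (-1 : ℝ)*b11*b23)*hc12 + ((1 : ℝ) + (1 : ℝ)*b23*b32 + (-1 : ℝ)*b22*b33 + (-1 : ℝ)*b12*b21 + (1 : ℝ)*b11*b22)*hc13 + ((-1 : ℝ)*b23*b31 + (1 : ℝ)*b21*b33)*hc23 + ((1 : ℝ)*b22*b31 + (-1 : ℝ)*b21*b32)*hc33 + ((-1 : ℝ))*hr13 + ((-1 : ℝ)*b31 + (1 : ℝ)*b13)*hd)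
  · exact qdh _ _ _ _ _ ha hne (by ring)
  · exact qdh _ _ _ _ _ ha hne (by linear_combination ((-1 : ℝ)*b13*b32 + (1 : ℝ)*b12*b33)*hc11 + ((1 : ℝ) + (1 : ℝ)*b23*b32 + (-1 : ℝ)*b22*b33 + (1 : ℝ)*b13*b31 + (-1 : ℝ)*b11*b33)*hc12 + ((-1 : ℝ)*b12*b31 + (1 : ℝ)*b11*b32)*hc13 + ((-1 : ℝ)*b23*b31 + (1 : ℝ)*b21*b33)*hc22 + ((1 : ℝ)*b22*b31 + (-1 : ℝ)*b21*b32)*hc23 + ((1 : ℝ))*hr12 + ((1 : ℝ)*b21 + (1 : ℝ)*b12)*hd)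
  · exact qdh _ _ _ _ _ ha hne (by ring)
  · exact qdh _ _ _ _ _ ha hne (by ring)

set_option maxHeartbeats 1000000 in
/-- Isoclinic (van Elfrikhof) representation: every element of SO(4) is a
product `A₁(a,b,c,d) * A₂(p,q,r,s)` with `a²+b²+c²+d² = 1` and `p²+q²+r²+s² = 1`. -/
theorem isoclinic_representation (A : Matrix (Fin 4) (Fin 4) ℝ)
    (hO : Aᵀ * A = 1) (hdet : A.det = 1) :
    ∃ a b c d p q r s : ℝ,
      a ^ 2 + b ^ 2 + c ^ 2 + d ^ 2 = 1 ∧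
      p ^ 2 + q ^ 2 + r ^ 2 + s ^ 2 = 1 ∧
      A = A₁ a b c d * A₂ p q r s := by
  obtain ⟨a0, ha0⟩ : ∃ x, A 0 0 = x := ⟨_, rfl⟩
  obtain ⟨a1, ha1⟩ : ∃ x, A 1 0 = x := ⟨_, rfl⟩
  obtain ⟨a2, ha2⟩ : ∃ x, A 2 0 = x := ⟨_, rfl⟩
  obtain ⟨a3, ha3⟩ : ∃ x, A 3 0 = x := ⟨_, rfl⟩
  have hu : a0*a0 + a1*a1 + a2*a2 + a3*a3 = 1 := by
    have h := congrFun (congrFun hO 0) 0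
    simp [Matrix.mul_apply, Fin.sum_univ_four, Matrix.one_apply, ha0, ha1, ha2, ha3] at h
    linear_combination h
  set B := A₁ a0 (-a1) (-a2) (-a3) * A with hBdef
  have hprod : A₁ a0 a1 a2 a3 * A₁ a0 (-a1) (-a2) (-a3) = 1 := by
    rw [A1_mul,
      show a0*a0 - a1*(-a1) - a2*(-a2) - a3*(-a3) = 1 from by linear_combination hu,
      show a0*(-a1) + a1*a0 + a2*(-a3) - a3*(-a2) = 0 from by ring,
      show a0*(-a2) - a1*(-a3) + a2*a0 + a3*(-a1) = 0 from by ring,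
      show a0*(-a3) + a1*(-a2) - a2*(-a1) + a3*a0 = 0 from by ring, A1_one]
  have hA : A₁ a0 a1 a2 a3 * B = A := by rw [hBdef, ← mul_assoc, hprod, one_mul]
  have hBo : Bᵀ * B = 1 := by
    rw [hBdef, Matrix.transpose_mul, A1_transpose, neg_neg, neg_neg, neg_neg,
      mul_assoc, ← mul_assoc (A₁ a0 a1 a2 a3), hprod, one_mul, hO]
  have hBB : B * Bᵀ = 1 := mul_eq_one_comm.mp hBo
  have hdB : B.det = 1 := by
    rw [hBdef, Matrix.det_mul, A1_det, hdet, mul_one]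
    linear_combination (a0^2 + a1^2 + a2^2 + a3^2 + 1) * hu
  have hB00 : B 0 0 = 1 := by
    rw [hBdef]
    simp [A₁, Matrix.mul_apply, Fin.sum_univ_four, Matrix.vecHead, Matrix.vecTail,
      ha0, ha1, ha2, ha3]
    all_goals first | ring1 | linear_combination hu
  have hB10 : B 1 0 = 0 := by
    rw [hBdef]
    simp [A₁, Matrix.mul_apply, Fin.sum_univ_four, Matrix.vecHead, Matrix.vecTail,
      ha0, ha1, ha2, ha3]
    all_goals first | ring1 | linear_combination hu
  have hB20 : B 2 0 = 0 := by
    rw [hBdef]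
    simp [A₁, Matrix.mul_apply, Fin.sum_univ_four, Matrix.vecHead, Matrix.vecTail,
      ha0, ha1, ha2, ha3]
    all_goals first | ring1 | linear_combination hu
  have hB30 : B 3 0 = 0 := by
    rw [hBdef]
    simp [A₁, Matrix.mul_apply, Fin.sum_univ_four, Matrix.vecHead, Matrix.vecTail,
      ha0, ha1, ha2, ha3]
    all_goals first | ring1 | linear_combination hu
  have hr0 : B 0 0 * B 0 0 + B 0 1 * B 0 1 + B 0 2 * B 0 2 + B 0 3 * B 0 3 = 1 := by
    have h := congrFun (congrFun hBB 0) 0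
    simp [Matrix.mul_apply, Fin.sum_univ_four, Matrix.one_apply] at h
    linear_combination h
  have h123 : B 0 1 * B 0 1 + B 0 2 * B 0 2 + B 0 3 * B 0 3 = 0 := by
    rw [hB00] at hr0; linarith
  have hB01 : B 0 1 = 0 := mul_self_eq_zero.mp (le_antisymm
    (by nlinarith [mul_self_nonneg (B 0 2), mul_self_nonneg (B 0 3)]) (mul_self_nonneg _))
  have hB02 : B 0 2 = 0 := mul_self_eq_zero.mp (le_antisymm
    (by nlinarith [mul_self_nonneg (B 0 1), mul_self_nonneg (B 0 3)]) (mul_self_nonneg _))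
  have hB03 : B 0 3 = 0 := mul_self_eq_zero.mp (le_antisymm
    (by nlinarith [mul_self_nonneg (B 0 1), mul_self_nonneg (B 0 2)]) (mul_self_nonneg _))
  have hBex : B = !![1, 0, 0, 0;
                     0, B 1 1, B 1 2, B 1 3;
                     0, B 2 1, B 2 2, B 2 3;
                     0, B 3 1, B 3 2, B 3 3] := by
    ext i j
    fin_cases i <;> fin_cases j <;>
      simp [hB00, hB01, hB02, hB03, hB10, hB20, hB30, Matrix.vecHead, Matrix.vecTail]
  have hc11 : B 1 1 * B 1 1 + B 2 1 * B 2 1 + B 3 1 * B 3 1 = 1 := by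
    have h := congrFun (congrFun hBo 1) 1
    simp [Matrix.mul_apply, Fin.sum_univ_four, Matrix.one_apply,
      hB01, hB02, hB03, hB10, hB20, hB30] at h
    linear_combination h
  have hc12 : B 1 1 * B 1 2 + B 2 1 * B 2 2 + B 3 1 * B 3 2 = 0 := by
    have h := congrFun (congrFun hBo 1) 2
    simp [Matrix.mul_apply, Fin.sum_univ_four, Matrix.one_apply,
      hB01, hB02, hB03, hB10, hB20, hB30] at h
    linear_combination h
  have hc13 : B 1 1 * B 1 3 + B 2 1 * B 2 3 + B 3 1 * B 3 3 = 0 := by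
    have h := congrFun (congrFun hBo 1) 3
    simp [Matrix.mul_apply, Fin.sum_univ_four, Matrix.one_apply,
      hB01, hB02, hB03, hB10, hB20, hB30] at h
    linear_combination h
  have hc22 : B 1 2 * B 1 2 + B 2 2 * B 2 2 + B 3 2 * B 3 2 = 1 := by
    have h := congrFun (congrFun hBo 2) 2
    simp [Matrix.mul_apply, Fin.sum_univ_four, Matrix.one_apply,
      hB01, hB02, hB03, hB10, hB20, hB30] at h
    linear_combination h
  have hc23 : B 1 2 * B 1 3 + B 2 2 * B 2 3 + B 3 2 * B 3 3 = 0 := by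
    have h := congrFun (congrFun hBo 2) 3
    simp [Matrix.mul_apply, Fin.sum_univ_four, Matrix.one_apply,
      hB01, hB02, hB03, hB10, hB20, hB30] at h
    linear_combination h
  have hc33 : B 1 3 * B 1 3 + B 2 3 * B 2 3 + B 3 3 * B 3 3 = 1 := by
    have h := congrFun (congrFun hBo 3) 3
    simp [Matrix.mul_apply, Fin.sum_univ_four, Matrix.one_apply,
      hB01, hB02, hB03, hB10, hB20, hB30] at h
    linear_combination h
  have hr11 : B 1 1 * B 1 1 + B 1 2 * B 1 2 + B 1 3 * B 1 3 = 1 := by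
    have h := congrFun (congrFun hBB 1) 1
    simp [Matrix.mul_apply, Fin.sum_univ_four, Matrix.one_apply,
      hB01, hB02, hB03, hB10, hB20, hB30] at h
    linear_combination h
  have hr12 : B 1 1 * B 2 1 + B 1 2 * B 2 2 + B 1 3 * B 2 3 = 0 := by
    have h := congrFun (congrFun hBB 1) 2
    simp [Matrix.mul_apply, Fin.sum_univ_four, Matrix.one_apply,
      hB01, hB02, hB03, hB10, hB20, hB30] at h
    linear_combination h
  have hr13 : B 1 1 * B 3 1 + B 1 2 * B 3 2 + B 1 3 * B 3 3 = 0 := by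
    have h := congrFun (congrFun hBB 1) 3
    simp [Matrix.mul_apply, Fin.sum_univ_four, Matrix.one_apply,
      hB01, hB02, hB03, hB10, hB20, hB30] at h
    linear_combination h
  have hr22 : B 2 1 * B 2 1 + B 2 2 * B 2 2 + B 2 3 * B 2 3 = 1 := by
    have h := congrFun (congrFun hBB 2) 2
    simp [Matrix.mul_apply, Fin.sum_univ_four, Matrix.one_apply,
      hB01, hB02, hB03, hB10, hB20, hB30] at h
    linear_combination h
  have hr23 : B 2 1 * B 3 1 + B 2 2 * B 3 2 + B 2 3 * B 3 3 = 0 := by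
    have h := congrFun (congrFun hBB 2) 3
    simp [Matrix.mul_apply, Fin.sum_univ_four, Matrix.one_apply,
      hB01, hB02, hB03, hB10, hB20, hB30] at h
    linear_combination h
  have hr33 : B 3 1 * B 3 1 + B 3 2 * B 3 2 + B 3 3 * B 3 3 = 1 := by
    have h := congrFun (congrFun hBB 3) 3
    simp [Matrix.mul_apply, Fin.sum_univ_four, Matrix.one_apply,
      hB01, hB02, hB03, hB10, hB20, hB30] at h
    linear_combination h
  have hd3 : B 1 1*(B 2 2*B 3 3 - B 2 3*B 3 2) - B 1 2*(B 2 1*B 3 3 - B 2 3*B 3 1)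
      + B 1 3*(B 2 1*B 3 2 - B 2 2*B 3 1) = 1 := by
    have h := hdB
    rw [hBex] at h
    simp [Matrix.det_succ_row_zero, Fin.sum_univ_succ, Fin.succAbove,
      Matrix.vecHead, Matrix.vecTail, Fin.castSucc, Fin.castAdd, Fin.castLE] at h
    linear_combination h
  obtain ⟨q0, q1, q2, q3, e00, e11, e22, e33, e01, e02, e03, e12, e13, e23⟩ :=
    so3_quat (B 1 1) (B 1 2) (B 1 3) (B 2 1) (B 2 2) (B 2 3) (B 3 1) (B 3 2) (B 3 3)
      hc11 hc12 hc13 hc22 hc23 hc33 hr11 hr12 hr13 hr22 hr23 hr33 hd3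
  have hq : q0^2+q1^2+q2^2+q3^2 = 1 := by linear_combination (e00+e11+e22+e33)/4
  have hBeq : B = A₁ q0 q1 q2 q3 * A₂ q0 (-q1) (-q2) (-q3) := by
    rw [A1_A2_conj, hBex]
    ext i j
    fin_cases i <;> fin_cases j <;>
      simp [Matrix.vecHead, Matrix.vecTail]
    all_goals try rfl
    · linear_combination -hq
    · linear_combination (-e00-e11+e22+e33)/4
    · linear_combination (e03-e12)/2
    · linear_combination (-e13-e02)/2
    · linear_combination (-e12-e03)/2
    · linear_combination (-e00+e11-e22+e33)/4
    · linear_combination (e01-e23)/2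
    · linear_combination (e02-e13)/2
    · linear_combination (-e23-e01)/2
    · linear_combination (-e00+e11+e22-e33)/4
  refine ⟨a0*q0 - a1*q1 - a2*q2 - a3*q3, a0*q1 + a1*q0 + a2*q3 - a3*q2,
      a0*q2 - a1*q3 + a2*q0 + a3*q1, a0*q3 + a1*q2 - a2*q1 + a3*q0,
      q0, -q1, -q2, -q3, ?_, ?_, ?_⟩
  · linear_combination (q0^2+q1^2+q2^2+q3^2) * hu + hq
  · linear_combination hq
  · rw [← hA, hBeq, ← mul_assoc, A1_mul]
end

section
/- Let E be a finite-dimensional real inner product space with dim E ≥ 2 and let W be a self-adjoint endomorphism of E such that ⟨Wσ,τ⟩·(⟨Wσ,σ⟩ − ⟨Wτ,τ⟩) = 0 for all σ,τ ∈ E with ‖σ‖ = ‖τ‖ = 1 and ⟨σ,τ⟩ = 0. Then ⟨Wσ,σ⟩ = ⟨Wτ,τ⟩ and ⟨Wσ,τ⟩ = 0 for every such orthonormal pair σ,τ; consequently W is a real scalar multiple of the identity, and if in addition tr W = 0 then W = 0. -/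
open scoped RealInnerProductSpace

/-- If `W` is a self-adjoint endomorphism of a real inner product space `E`
with `dim E ≥ 2` such that `⟨Wσ,τ⟩·(⟨Wσ,σ⟩ − ⟨Wτ,τ⟩) = 0` for every
orthonormal pair `σ,τ`, then `⟨Wσ,σ⟩ = ⟨Wτ,τ⟩` and `⟨Wσ,τ⟩ = 0` for every such
pair; consequently `W` is a scalar multiple of the identity, and if `tr W = 0`
then `W = 0`. -/
theorem selfAdjoint_vanishes_of_quadratic_condition
    {E : Type*} [NormedAddCommGroup E] [InnerProductSpace ℝ E]
    [FiniteDimensional ℝ E] (hdim : 2 ≤ Module.finrank ℝ E)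
    (W : E →ₗ[ℝ] E) (hW : ∀ x y : E, ⟪W x, y⟫ = ⟪x, W y⟫)
    (h : ∀ σ τ : E, ‖σ‖ = 1 → ‖τ‖ = 1 → ⟪σ, τ⟫ = 0 →
      ⟪W σ, τ⟫ * (⟪W σ, σ⟫ - ⟪W τ, τ⟫) = 0) :
    (∀ σ τ : E, ‖σ‖ = 1 → ‖τ‖ = 1 → ⟪σ, τ⟫ = 0 →
      ⟪W σ, σ⟫ = ⟪W τ, τ⟫ ∧ ⟪W σ, τ⟫ = 0) ∧
    (∃ c : ℝ, W = c • LinearMap.id) ∧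
    (LinearMap.trace ℝ E W = 0 → W = 0) := by
  -- Key step
  have key : ∀ σ τ : E, ‖σ‖ = 1 → ‖τ‖ = 1 → ⟪σ, τ⟫ = 0 →
      ⟪W σ, σ⟫ = ⟪W τ, τ⟫ ∧ ⟪W σ, τ⟫ = 0 := by
    intro σ τ hσ hτ hστ
    have hσσ : ⟪σ, σ⟫ = 1 := by
      rw [real_inner_self_eq_norm_sq, hσ]; norm_num
    have hττ : ⟪τ, τ⟫ = 1 := by
      rw [real_inner_self_eq_norm_sq, hτ]; norm_num
    have hτσ : ⟪τ, σ⟫ = 0 := by rw [real_inner_comm]; exact hστ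
    set a := ⟪W σ, σ⟫ with ha
    set b := ⟪W τ, τ⟫ with hb
    set c := ⟪W σ, τ⟫ with hc
    have hWc : ⟪W τ, σ⟫ = c := by rw [hW τ σ, real_inner_comm]
    have h1 : c * (a - b) = 0 := h σ τ hσ hτ hστ
    set σ' : E := (3/5 : ℝ) • σ + (4/5 : ℝ) • τ with hσ'
    set τ' : E := (4/5 : ℝ) • σ - (3/5 : ℝ) • τ with hτ'
    have hσ'n : ‖σ'‖ = 1 := by
      have : ⟪σ', σ'⟫ = 1 := by
        simp only [hσ', inner_add_left, inner_add_right, inner_smul_left, inner_smul_right,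
          hσσ, hττ, hστ, hτσ, conj_trivial]
        ring
      have h2 := real_inner_self_eq_norm_sq σ'
      nlinarith [norm_nonneg σ']
    have hτ'n : ‖τ'‖ = 1 := by
      have : ⟪τ', τ'⟫ = 1 := by
        simp only [hτ', inner_sub_left, inner_sub_right, inner_smul_left, inner_smul_right,
          hσσ, hττ, hστ, hτσ, conj_trivial]
        ring
      have h2 := real_inner_self_eq_norm_sq τ'
      nlinarith [norm_nonneg τ']
    have hortho : ⟪σ', τ'⟫ = 0 := by
      simp only [hσ', hτ', inner_add_left, inner_sub_right, inner_smul_left, inner_smul_right,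
        hσσ, hττ, hστ, hτσ, conj_trivial]
      ring
    have h2 := h σ' τ' hσ'n hτ'n hortho
    have e1 : ⟪W σ', τ'⟫ = (12*(a-b) + 7*c)/25 := by
      simp only [hσ', hτ', map_add, map_smul, inner_add_left, inner_sub_right,
        inner_smul_left, inner_smul_right, ← ha, ← hb, ← hc, hWc, conj_trivial]
      ring
    have e2 : ⟪W σ', σ'⟫ = (9*a + 16*b + 24*c)/25 := by
      simp only [hσ', map_add, map_smul, inner_add_left, inner_add_right,
        inner_smul_left, inner_smul_right, ← ha, ← hb, ← hc, hWc, conj_trivial]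
      ring
    have e3 : ⟪W τ', τ'⟫ = (16*a + 9*b - 24*c)/25 := by
      simp only [hτ', map_sub, map_smul, inner_sub_left, inner_sub_right,
        inner_smul_left, inner_smul_right, ← ha, ← hb, ← hc, hWc, conj_trivial]
      ring
    rw [e1, e2, e3] at h2
    have h3 : (12*(a-b) + 7*c) * (-7*(a-b) + 48*c) = 0 := by
      linear_combination (625 : ℝ) * h2
    have h4 : (a - b)^2 = 4 * c^2 := by
      linear_combination (-1/84 : ℝ) * h3 + (527/84 : ℝ) * h1
    have h5a : c^2 * (a-b)^2 = 0 := by linear_combination (c*(a-b)) * h1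
    have h5b : c^4 = 0 := by
      linear_combination (1/4 : ℝ) * h5a - (c^2/4) * h4
    have hc0 : c = 0 := by
      have := pow_eq_zero_iff (n := 4) (by norm_num) |>.mp h5b
      exact this
    have hab : a = b := by
      rw [hc0] at h4
      have : (a - b)^2 = 0 := by linarith
      have := pow_eq_zero_iff (n := 2) (by norm_num) |>.mp this
      linarith
    exact ⟨hab, hc0⟩
  refine ⟨key, ?_⟩
  -- every unit vector is an eigenvector
  have eig : ∀ σ : E, ‖σ‖ = 1 → W σ = ⟪W σ, σ⟫ • σ := by
    intro σ hσ
    set v : E := W σ - ⟪W σ, σ⟫ • σ with hv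
    have hvσ : ⟪σ, v⟫ = 0 := by
      simp only [hv, inner_sub_right, inner_smul_right, real_inner_self_eq_norm_sq, hσ]
      rw [real_inner_comm]
      ring
    have hv0 : v = 0 := by
      by_contra hne
      have hvn : ‖v‖ ≠ 0 := norm_ne_zero_iff.mpr hne
      set τ : E := ‖v‖⁻¹ • v with hτ
      have hτn : ‖τ‖ = 1 := by
        rw [hτ, norm_smul, norm_inv, norm_norm, inv_mul_cancel₀ hvn]
      have hστ : ⟪σ, τ⟫ = 0 := by
        rw [hτ, inner_smul_right, hvσ, mul_zero]
      have h6 := (key σ τ hσ hτn hστ).2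
      rw [hτ, inner_smul_right] at h6
      have h7 : ⟪W σ, v⟫ = 0 := by
        rcases mul_eq_zero.mp h6 with h' | h'
        · exact absurd h' (inv_ne_zero hvn)
        · exact h'
      have h8 : ⟪v, v⟫ = 0 := by
        have : ⟪v, v⟫ = ⟪W σ, v⟫ - ⟪W σ, σ⟫ * ⟪σ, v⟫ := by
          simp only [hv, inner_sub_left, inner_smul_left, conj_trivial]
        rw [this, h7, hvσ]; ring
      exact hne (inner_self_eq_zero.mp h8)
    rw [hv] at hv0
    exact sub_eq_zero.mp hv0
  have : Nontrivial E := Module.nontrivial_of_finrank_pos (R := ℝ) (by omega)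
  obtain ⟨e, he⟩ := exists_norm_eq E (zero_le_one)
  set c := ⟪W e, e⟫ with hcdef
  have unit_smul : ∀ x : E, x ≠ 0 → ‖(‖x‖⁻¹ • x)‖ = 1 := by
    intro x hx
    rw [norm_smul, norm_inv, norm_norm, inv_mul_cancel₀ (norm_ne_zero_iff.mpr hx)]
  have const : ∀ σ : E, ‖σ‖ = 1 → ⟪W σ, σ⟫ = c := by
    intro σ hσ
    by_cases hr : ∃ r : ℝ, σ = r • e
    · obtain ⟨r, rfl⟩ := hr
      have hr1 : r ^ 2 = 1 := by
        rw [norm_smul, he, mul_one, Real.norm_eq_abs] at hσ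
        rw [← sq_abs, hσ, one_pow]
      simp only [map_smul, inner_smul_left, inner_smul_right, conj_trivial, ← hcdef]
      linear_combination c * hr1
    · have hu : σ + e ≠ 0 := by
        intro h0
        exact hr ⟨-1, by rw [neg_smul, one_smul]; exact eq_neg_of_add_eq_zero_left h0⟩
      set u : E := σ + e with hudef
      have hun : ‖u‖ ≠ 0 := norm_ne_zero_iff.mpr hu
      have huu : ‖(‖u‖⁻¹ • u)‖ = 1 := unit_smul u hu
      set g : ℝ := ⟪W (‖u‖⁻¹ • u), ‖u‖⁻¹ • u⟫ with hgdef
      have hWu : W u = g • u := by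
        have h1 := eig _ huu
        rw [← hgdef, map_smul] at h1
        have h2 := congrArg (fun y : E => (‖u‖ : ℝ) • y) h1
        simp only [smul_smul] at h2
        rw [mul_inv_cancel₀ hun, one_smul] at h2
        rw [h2]
        congr 1
        field_simp
      have h2 : ⟪W σ, σ⟫ • σ + c • e = g • σ + g • e := by
        have hsum : W σ + W e = g • σ + g • e := by
          rw [hudef] at hWu
          rw [map_add, smul_add] at hWu
          exact hWu
        rw [eig σ hσ, eig e he, ← hcdef] at hsum
        exact hsum
      have h3 : (⟪W σ, σ⟫ - g) • σ = (g - c) • e := by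
        rw [sub_smul, sub_smul]
        abel_nf
        linear_combination (norm := module) h2
      by_cases hg : ⟪W σ, σ⟫ = g
      · have h4 : (g - c) • e = 0 := by rw [← h3, hg, sub_self, zero_smul]
        have he0 : e ≠ 0 := by
          intro h'
          rw [h', norm_zero] at he
          norm_num at he
        have : g - c = 0 := by
          rcases smul_eq_zero.mp h4 with h' | h'
          · exact h'
          · exact absurd h' he0
        rw [hg]
        linarith
      · exfalso
        apply hr
        refine ⟨(⟪W σ, σ⟫ - g)⁻¹ * (g - c), ?_⟩
        rw [← smul_smul, ← h3, smul_smul, inv_mul_cancel₀ (sub_ne_zero.mpr hg), one_smul]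
  have hx : ∀ x : E, W x = c • x := by
    intro x
    rcases eq_or_ne x 0 with rfl | hx0
    · simp
    · have hn : ‖x‖ ≠ 0 := norm_ne_zero_iff.mpr hx0
      have h1 := eig _ (unit_smul x hx0)
      rw [const _ (unit_smul x hx0)] at h1
      have h2 := congrArg (fun y : E => (‖x‖ : ℝ) • y) h1
      simp only [map_smul, smul_smul, mul_inv_cancel₀ hn, one_smul] at h2
      rw [h2]
      congr 1
      field_simp
  have hscal : W = c • LinearMap.id := by
    ext x
    simp [hx x]
  refine ⟨⟨c, hscal⟩, fun ht => ?_⟩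
  have htr : LinearMap.trace ℝ E W = c * Module.finrank ℝ E := by
    rw [hscal, map_smul, LinearMap.trace_id, smul_eq_mul]
  rw [htr] at ht
  have hfr : (Module.finrank ℝ E : ℝ) ≠ 0 := by
    simp only [ne_eq, Nat.cast_eq_zero]
    omega
  have hc0 : c = 0 := (mul_eq_zero.mp ht).resolve_right hfr
  rw [hscal, hc0, zero_smul]
end
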